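/- The ℝ-subalgebra of M₄(ℂ) generated by the set {γ(v)·γ(w) : v, w ∈ M₂(ℂ) Hermitian} equals the set of all block-diagonal matrices fromBlocks K 0 0 (K‡) with K ∈ M₂(ℂ). (This is the even part D⁽⁺⁾ of the Dirac algebra.) -/

import Mathlib

open Matrix

/-- The space of 2×2 complex matrices. -/
abbrev M2 : Type := Matrix (Fin 2) (Fin 2) ℂ

/-- The space of 4×4 complex matrices, indexed by blocks (endomorphisms of 4-spinor space). -/
abbrev M4 : Type := Matrix (Fin 2 ⊕ Fin 2) (Fin 2 ⊕ Fin 2) ℂ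

/-- The Dirac map in two-spinor (Weyl) form: `γ(y) = fromBlocks 0 (√2·y) (√2·adj y) 0`. -/
noncomputable def diracGamma (y : M2) : M4 :=
  fromBlocks 0 ((Real.sqrt 2 : ℂ) • y) ((Real.sqrt 2 : ℂ) • y.adjugate) 0

/-- The ε-adjoint `X‡ := adj(Xᴴ)`. -/
def ddag (X : M2) : M2 := (Xᴴ).adjugate

lemma ddag_one : ddag 1 = 1 := by
  simp [ddag]

lemma ddag_zero : ddag 0 = 0 := by
  simp [ddag]

lemma ddag_add (K L : M2) : ddag (K + L) = ddag K + ddag L := by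
  ext i j
  fin_cases i <;> fin_cases j <;>
    simp [ddag, conjTranspose_apply, adjugate_fin_two] <;> ring

lemma ddag_mul (K L : M2) : ddag (K * L) = ddag K * ddag L := by
  simp [ddag, conjTranspose_mul, adjugate_mul_distrib]

lemma ddag_real_smul (r : ℝ) (K : M2) : ddag (r • K) = r • ddag K := by
  have : (r • K)ᴴ = r • Kᴴ := by
    ext i j; simp [conjTranspose_apply]
  rw [ddag, ddag, this]
  ext i j
  fin_cases i <;> fin_cases j <;> simp [adjugate_fin_two]

lemma ddag_algebraMap (r : ℝ) : ddag (algebraMap ℝ M2 r) = algebraMap ℝ M2 r := by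
  have : algebraMap ℝ M2 r = r • (1 : M2) := by
    rw [Algebra.algebraMap_eq_smul_one]
  rw [this, ddag_real_smul, ddag_one]

/-- The block-diagonal embedding `K ↦ fromBlocks K 0 0 (K‡)` as an `ℝ`-algebra hom. -/
def blockPhi : M2 →ₐ[ℝ] M4 where
  toFun K := fromBlocks K 0 0 (ddag K)
  map_one' := by
    show fromBlocks 1 0 0 (ddag 1) = 1
    rw [ddag_one, ← fromBlocks_one]
  map_mul' K L := by
    show fromBlocks (K * L) 0 0 (ddag (K * L))
      = fromBlocks K 0 0 (ddag K) * fromBlocks L 0 0 (ddag L)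
    rw [ddag_mul, fromBlocks_multiply]
    simp
  map_zero' := by
    show fromBlocks 0 0 0 (ddag 0) = 0
    simp [ddag_zero]
  map_add' K L := by
    show fromBlocks (K + L) 0 0 (ddag (K + L))
      = fromBlocks K 0 0 (ddag K) + fromBlocks L 0 0 (ddag L)
    rw [ddag_add, fromBlocks_add]
    simp
  commutes' r := by
    show fromBlocks (algebraMap ℝ M2 r) 0 0 (ddag (algebraMap ℝ M2 r)) = algebraMap ℝ M4 r
    rw [ddag_algebraMap]
    have h4 : algebraMap ℝ M4 r = r • (1 : M4) := Algebra.algebraMap_eq_smul_one r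
    rw [h4, Algebra.algebraMap_eq_smul_one, ← fromBlocks_one, fromBlocks_smul]
    simp

lemma sqrt2_mul_self : ((Real.sqrt 2 : ℂ)) * ((Real.sqrt 2 : ℂ)) = 2 := by
  rw [← Complex.ofReal_mul, Real.mul_self_sqrt (by norm_num)]
  norm_num

lemma gamma_mul (v w : M2) :
    diracGamma v * diracGamma w
      = fromBlocks ((2:ℂ) • (v * w.adjugate)) 0 0 ((2:ℂ) • (v.adjugate * w)) := by
  have hc : ∀ A B : M2,
      ((Real.sqrt 2 : ℂ) • A) * ((Real.sqrt 2 : ℂ) • B) = (2:ℂ) • (A * B) := by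
    intro A B
    rw [Matrix.smul_mul, Matrix.mul_smul, smul_smul, sqrt2_mul_self]
  rw [diracGamma, diracGamma, fromBlocks_multiply, hc, hc]
  simp

lemma ddag_gen (v w : M2) (hv : v.IsHermitian) (hw : w.IsHermitian) :
    ddag ((2:ℂ) • (v * w.adjugate)) = (2:ℂ) • (v.adjugate * w) := by
  have h2 : ((2:ℂ) • (v * w.adjugate))ᴴ = (2:ℂ) • (w.adjugate * v) := by
    rw [conjTranspose_smul, conjTranspose_mul, adjugate_conjTranspose, hw, hv]
    congr 1
    simp
  rw [ddag, h2]
  have hadj : ∀ (c : ℂ) (A : M2), (c • A).adjugate = c • A.adjugate := by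
    intro c A
    ext i j
    fin_cases i <;> fin_cases j <;> simp [adjugate_fin_two]
  rw [hadj, adjugate_mul_distrib]
  congr 1
  have : v.adjugate * w.adjugate.adjugate = v.adjugate * w := by
    congr 1
    ext i j
    fin_cases i <;> fin_cases j <;> simp [adjugate_fin_two]
  exact this

lemma gen_eq_phi (v w : M2) (hv : v.IsHermitian) (hw : w.IsHermitian) :
    diracGamma v * diracGamma w = blockPhi ((2:ℂ) • (v * w.adjugate)) := by
  rw [gamma_mul, blockPhi]
  simp only [AlgHom.coe_mk, RingHom.coe_mk, MonoidHom.coe_mk, OneHom.coe_mk]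
  rw [ddag_gen v w hv hw]

/-- The genset in `M2`: the preimage subalgebra. -/
noncomputable def genAlg : Subalgebra ℝ M4 :=
  Algebra.adjoin ℝ
    {m : M4 | ∃ v w : M2, v.IsHermitian ∧ w.IsHermitian ∧
      m = diracGamma v * diracGamma w}

noncomputable def preAlg : Subalgebra ℝ M2 := genAlg.comap blockPhi

lemma gen_mem_pre (v w : M2) (hv : v.IsHermitian) (hw : w.IsHermitian) :
    (2:ℂ) • (v * w.adjugate) ∈ preAlg := by
  show blockPhi ((2:ℂ) • (v * w.adjugate)) ∈ genAlg
  rw [← gen_eq_phi v w hv hw]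
  exact Algebra.subset_adjoin ⟨v, w, hv, hw, rfl⟩

lemma half_gen_mem_pre (v w : M2) (hv : v.IsHermitian) (hw : w.IsHermitian) :
    v * w.adjugate ∈ preAlg := by
  have h := preAlg.smul_mem (gen_mem_pre v w hv hw) ((1:ℝ)/2)
  have heq : ((1:ℝ)/2) • ((2:ℂ) • (v * w.adjugate)) = v * w.adjugate := by
    ext i j
    simp [Matrix.smul_apply, Complex.real_smul]
  rwa [heq] at h

lemma herm_mem_pre (A : M2) (hA : A.IsHermitian) : A ∈ preAlg := by
  have h := half_gen_mem_pre A 1 hA isHermitian_one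
  simpa using h

lemma i_one_mem_pre : (Complex.I : ℂ) • (1 : M2) ∈ preAlg := by
  -- σ₂ * adj σ₃ = -i σ₁ ; (-i σ₁) * σ₁ = -i I ; negate.
  set s1 : M2 := !![0, 1; 1, 0] with hs1
  set s2 : M2 := !![0, -Complex.I; Complex.I, 0] with hs2
  set s3 : M2 := !![1, 0; 0, -1] with hs3
  have h1 : s1.IsHermitian := by
    rw [IsHermitian]; ext i j
    fin_cases i <;> fin_cases j <;> simp [hs1, conjTranspose_apply]
  have h2 : s2.IsHermitian := by
    rw [IsHermitian]; ext i j
    fin_cases i <;> fin_cases j <;> simp [hs2, conjTranspose_apply]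
  have h3 : s3.IsHermitian := by
    rw [IsHermitian]; ext i j
    fin_cases i <;> fin_cases j <;> simp [hs3, conjTranspose_apply]
  have ha : s2 * s3.adjugate ∈ preAlg := half_gen_mem_pre s2 s3 h2 h3
  have hb : s1 ∈ preAlg := herm_mem_pre s1 h1
  have hm : (s2 * s3.adjugate) * s1 ∈ preAlg := preAlg.mul_mem ha hb
  have key : (Complex.I : ℂ) • (1 : M2) = -((s2 * s3.adjugate) * s1) := by
    ext i j
    fin_cases i <;> fin_cases j <;>
      simp [hs1, hs2, hs3, adjugate_fin_two, Matrix.mul_apply, Fin.sum_univ_two]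
  rw [key]
  exact preAlg.neg_mem hm

lemma all_mem_pre (K : M2) : K ∈ preAlg := by
  set A : M2 := ((1:ℝ)/2) • (K + Kᴴ) with hA
  set B : M2 := ((1:ℝ)/2) • ((Complex.I : ℂ) • (Kᴴ - K)) with hB
  have hAh : A.IsHermitian := by
    rw [IsHermitian, hA]
    ext i j
    simp [conjTranspose_apply, Complex.ext_iff]
    ring_nf
    constructor <;> trivial
  have hBh : B.IsHermitian := by
    rw [IsHermitian, hB]
    ext i j
    simp [conjTranspose_apply, Complex.ext_iff]
    constructor <;> ring_nf
  have hKeq : K = A + ((Complex.I : ℂ) • (1 : M2)) * B := by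
    ext i j
    simp [hA, hB, Complex.ext_iff, Matrix.mul_apply, Fin.sum_univ_two,
      Matrix.one_apply, conjTranspose_apply]
    fin_cases i <;> fin_cases j <;> simp <;> constructor <;> ring_nf
  rw [hKeq]
  exact preAlg.add_mem (herm_mem_pre A hAh)
    (preAlg.mul_mem i_one_mem_pre (herm_mem_pre B hBh))

/-- The even part `D⁽⁺⁾` of the Dirac algebra: the ℝ-subalgebra of `M₄(ℂ)` generated by
the products `γ(v)·γ(w)` with `v, w` Hermitian equals the set of block-diagonal matrices
`fromBlocks K 0 0 (K‡)`, `K ∈ M₂(ℂ)`. -/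
theorem even_dirac_algebra_characterization :
    ((Algebra.adjoin ℝ
        {m : M4 | ∃ v w : M2, v.IsHermitian ∧ w.IsHermitian ∧
          m = diracGamma v * diracGamma w} : Subalgebra ℝ M4) : Set M4)
      = {Φ : M4 | ∃ K : M2, Φ = fromBlocks K 0 0 (ddag K)} := by
  ext Φ
  constructor
  · intro hΦ
    -- forward: the RHS is a subalgebra containing the generators
    let T : Subalgebra ℝ M4 :=
      { carrier := {Φ : M4 | ∃ K : M2, Φ = fromBlocks K 0 0 (ddag K)}
        one_mem' := ⟨1, by rw [ddag_one, ← fromBlocks_one]⟩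
        mul_mem' := by
          rintro a b ⟨K, rfl⟩ ⟨L, rfl⟩
          exact ⟨K * L, by rw [ddag_mul, fromBlocks_multiply]; simp⟩
        add_mem' := by
          rintro a b ⟨K, rfl⟩ ⟨L, rfl⟩
          exact ⟨K + L, by rw [ddag_add, fromBlocks_add]; simp⟩
        algebraMap_mem' := fun r => ⟨algebraMap ℝ M2 r, by
          rw [ddag_algebraMap]
          have h4 : algebraMap ℝ M4 r = r • (1 : M4) := Algebra.algebraMap_eq_smul_one r
          rw [h4, Algebra.algebraMap_eq_smul_one, ← fromBlocks_one, fromBlocks_smul]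
          simp⟩ }
    have hsub : Algebra.adjoin ℝ
        {m : M4 | ∃ v w : M2, v.IsHermitian ∧ w.IsHermitian ∧
          m = diracGamma v * diracGamma w} ≤ T := by
      apply Algebra.adjoin_le
      rintro m ⟨v, w, hv, hw, rfl⟩
      exact ⟨(2:ℂ) • (v * w.adjugate), by
        rw [gen_eq_phi v w hv hw, blockPhi]
        simp only [AlgHom.coe_mk, RingHom.coe_mk, MonoidHom.coe_mk, OneHom.coe_mk]⟩
    exact hsub hΦ
  · rintro ⟨K, rfl⟩
    exact all_mem_pre K
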